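/- The rough integral is controlled by X: Let 2 < p < 3, ω a superadditive nonnegative function on {0 ≤ s ≤ t ≤ 1}, X and 𝕏 satisfying Chen's relations with |X_{st}| ≤ ω(s,t)^{1/p} and |𝕏_{st}| ≤ ω(s,t)^{2/p}, and let a : [0,1] → L(ℝ^d, ℝⁿ), a′ : [0,1] → L(ℝ^d ⊗ ℝ^d, ℝⁿ) satisfy |a′_t − a′_s| ≤ ω(s,t)^{1/p}, sup_t |a′_t| ≤ M, and |a_t − a_s − a′_s(X_{st} ⊗ ·)| ≤ ω(s,t)^{2/p}. Suppose φ : [0,1] → ℝⁿ is a path with |φ_t − φ_s − a_s X_{st} − a′_s(𝕏_{st})| ≤ K ω(s,t)^{3/p} for all s ≤ t (for instance the path produced by the sewing lemma from μ_{ts} = a_s X_{st} + a′_s(𝕏_{st})). Then for all 0 ≤ s ≤ t ≤ 1: |φ_t − φ_s − a_s X_{st}| ≤ K ω(s,t)^{3/p} + M ω(s,t)^{2/p}; in particular (φ, a) is controlled by X with remainder of order ω^{2/p}. -/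
import Mathlib


/-- **The rough integral is controlled by `X`.** Under the hypotheses of the rough integral
lemma, with `M` a bound on `sup_t |a'_t|`, any path `φ` satisfying
`|φ_t - φ_s - a_s X_{st} - a'_s 𝕏_{st}| ≤ K ω(s,t)^{3/p}` satisfies
`|φ_t - φ_s - a_s X_{st}| ≤ K ω(s,t)^{3/p} + M ω(s,t)^{2/p}`, i.e. `(φ, a)` is controlled by
`X` with remainder of order `ω^{2/p}`. -/
theorem rough_integral_is_controlled
    (p : ℝ) (hp1 : 2 < p) (hp2 : p < 3) (d n : ℕ)
    (ω : ℝ → ℝ → ℝ)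
    (hω_nonneg : ∀ s t : ℝ, 0 ≤ s → s ≤ t → t ≤ 1 → 0 ≤ ω s t)
    (hω_super : ∀ s u t : ℝ, 0 ≤ s → s ≤ u → u ≤ t → t ≤ 1 → ω s u + ω u t ≤ ω s t)
    (X : ℝ → ℝ → (Fin d → ℝ)) (XX : ℝ → ℝ → (Fin d → Fin d → ℝ))
    (hChen1 : ∀ s u t : ℝ, 0 ≤ s → s ≤ u → u ≤ t → t ≤ 1 → X s t = X s u + X u t)
    (hChen2 : ∀ s u t : ℝ, 0 ≤ s → s ≤ u → u ≤ t → t ≤ 1 →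
      XX s t = XX s u + XX u t + (fun i j => X s u i * X u t j))
    (hXb : ∀ s t : ℝ, 0 ≤ s → s ≤ t → t ≤ 1 → ‖X s t‖ ≤ ω s t ^ (1 / p))
    (hXXb : ∀ s t : ℝ, 0 ≤ s → s ≤ t → t ≤ 1 → ‖XX s t‖ ≤ ω s t ^ (2 / p))
    (a : ℝ → (Fin d → ℝ) →L[ℝ] (Fin n → ℝ))
    (a' : ℝ → (Fin d → Fin d → ℝ) →L[ℝ] (Fin n → ℝ))
    (ha' : ∀ s t : ℝ, 0 ≤ s → s ≤ t → t ≤ 1 → ‖a' t - a' s‖ ≤ ω s t ^ (1 / p))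
    (M : ℝ) (hM : ∀ t : ℝ, 0 ≤ t → t ≤ 1 → ‖a' t‖ ≤ M)
    (hRa : ∀ s t : ℝ, 0 ≤ s → s ≤ t → t ≤ 1 → ∀ v : Fin d → ℝ,
      ‖a t v - a s v - a' s (fun i j => X s t i * v j)‖ ≤ ω s t ^ (2 / p) * ‖v‖)
    (φ : ℝ → (Fin n → ℝ)) (K : ℝ)
    (hφ : ∀ s t : ℝ, 0 ≤ s → s ≤ t → t ≤ 1 →
      ‖φ t - φ s - a s (X s t) - a' s (XX s t)‖ ≤ K * ω s t ^ (3 / p)) :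
    ∀ s t : ℝ, 0 ≤ s → s ≤ t → t ≤ 1 →
      ‖φ t - φ s - a s (X s t)‖ ≤ K * ω s t ^ (3 / p) + M * ω s t ^ (2 / p) := by
  intro s t hs hst ht
  have h1 := hφ s t hs hst ht
  have h2 : ‖a' s (XX s t)‖ ≤ M * ω s t ^ (2 / p) := by
    calc ‖a' s (XX s t)‖ ≤ ‖a' s‖ * ‖XX s t‖ := (a' s).le_opNorm _
    _ ≤ M * ω s t ^ (2 / p) := by
        apply mul_le_mul (hM s hs (le_trans hst ht)) (hXXb s t hs hst ht) (norm_nonneg _)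
        exact le_trans (norm_nonneg _) (hM s hs (le_trans hst ht))
  calc ‖φ t - φ s - a s (X s t)‖
      = ‖(φ t - φ s - a s (X s t) - a' s (XX s t)) + a' s (XX s t)‖ := by ring_nf
    _ ≤ ‖φ t - φ s - a s (X s t) - a' s (XX s t)‖ + ‖a' s (XX s t)‖ := norm_add_le _ _
    _ ≤ K * ω s t ^ (3 / p) + M * ω s t ^ (2 / p) := add_le_add h1 h2
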